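/- arXiv:1509.00759 — 4 statements merged into one kernel-verified Lean document; each statement's English description precedes it below -/
import Mathlib

section
/- Let $h$ be the probability generating function of a critical offspring distribution with mean 1 and finite positive variance $2b$, and let $h_n$ denote its iterates. Assume Kolmogorov's asymptotic $1 - h_n(0) \sim (bn)^{-1}$ as $n \to \infty$. Fix $\lambda > 0$, let $k = k(n) \to \infty$ with $k = o(n)$, set $s = s(n) = \exp(-\lambda/(b k))$, and let $m = n - k$. If additionally the local asymptotic $h_{j+1}(0) - h_j(0) \sim (b j^2)^{-1}$ holds as $j \to \infty$, then $\lim_{n\to\infty} \frac{b \lambda n^2}{k} (h_m(s) - h_m(0)) = 1$. -/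
open Filter Topology

lemma LD_iter_mem (h : ℝ → ℝ) (hmem : ∀ x ∈ Set.Icc (0:ℝ) 1, h x ∈ Set.Icc (0:ℝ) 1) :
    ∀ m, ∀ x ∈ Set.Icc (0:ℝ) 1, h^[m] x ∈ Set.Icc (0:ℝ) 1 := by
  intro m
  induction m with
  | zero => intro x hx; simpa using hx
  | succ m ih =>
    intro x hx
    rw [Function.iterate_succ_apply]
    exact ih _ (hmem x hx)

lemma LD_sum_bound (g : ℕ → ℝ) (b ε : ℝ) (hb : 0 < b) (hε : 0 ≤ ε) (hε1 : ε ≤ 1) (N : ℕ)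
    (H : ∀ i : ℕ, N ≤ i → 1 - ε ≤ b * (i:ℝ)^2 * (g (i+1) - g i) ∧
      b * (i:ℝ)^2 * (g (i+1) - g i) ≤ 1 + ε)
    (m j : ℕ) (hmN : N ≤ m) (hm1 : 1 ≤ m) :
    (j:ℝ) * ((1-ε) / (b * ((m:ℝ)+(j:ℝ))^2)) ≤ g (m+j) - g m ∧
      g (m+j) - g m ≤ (j:ℝ) * ((1+ε) / (b * (m:ℝ)^2)) := by
  have hmpos : (0:ℝ) < (m:ℝ) := by exact_mod_cast hm1
  have htel : ∑ i ∈ Finset.range j, (g (m+i+1) - g (m+i)) = g (m+j) - g m := by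
    simpa [add_assoc] using Finset.sum_range_sub (fun i => g (m+i)) j
  constructor
  · rw [← htel]
    have : ∀ i ∈ Finset.range j, (1-ε) / (b * ((m:ℝ)+(j:ℝ))^2) ≤ g (m+i+1) - g (m+i) := by
      intro i hi
      have hij : i < j := Finset.mem_range.mp hi
      have hNmi : N ≤ m + i := le_trans hmN (Nat.le_add_right m i)
      have h1 := (H (m+i) hNmi).1
      have hpos : (0:ℝ) < b * ((m:ℝ)+(i:ℝ))^2 := by positivity
      have hle : (1-ε) / (b * ((m:ℝ)+(i:ℝ))^2) ≤ g (m+i+1) - g (m+i) := by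
        rw [div_le_iff₀ hpos]
        calc (1-ε) ≤ b * ((m+i:ℕ):ℝ)^2 * (g (m+i+1) - g (m+i)) := h1
        _ = (g (m+i+1) - g (m+i)) * (b * ((m:ℝ)+(i:ℝ))^2) := by push_cast; ring
      refine le_trans ?_ hle
      have hijr : (i:ℝ) ≤ (j:ℝ) := by exact_mod_cast hij.le
      gcongr
      all_goals first | positivity | linarith
    calc (j:ℝ) * ((1-ε) / (b * ((m:ℝ)+(j:ℝ))^2))
        = ∑ _i ∈ Finset.range j, (1-ε) / (b * ((m:ℝ)+(j:ℝ))^2) := by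
          rw [Finset.sum_const, Finset.card_range, nsmul_eq_mul]
      _ ≤ ∑ i ∈ Finset.range j, (g (m+i+1) - g (m+i)) := Finset.sum_le_sum this
  · rw [← htel]
    have : ∀ i ∈ Finset.range j, g (m+i+1) - g (m+i) ≤ (1+ε) / (b * (m:ℝ)^2) := by
      intro i _
      have hNmi : N ≤ m + i := le_trans hmN (Nat.le_add_right m i)
      have h2 := (H (m+i) hNmi).2
      have hpos : (0:ℝ) < b * ((m:ℝ)+(i:ℝ))^2 := by positivity
      have hposm : (0:ℝ) < b * (m:ℝ)^2 := by positivity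
      have hle : g (m+i+1) - g (m+i) ≤ (1+ε) / (b * ((m:ℝ)+(i:ℝ))^2) := by
        rw [le_div_iff₀ hpos]
        calc (g (m+i+1) - g (m+i)) * (b * ((m:ℝ)+(i:ℝ))^2)
            = b * ((m+i:ℕ):ℝ)^2 * (g (m+i+1) - g (m+i)) := by push_cast; ring
          _ ≤ 1 + ε := h2
      refine le_trans hle ?_
      have hi0 : (0:ℝ) ≤ (i:ℝ) := Nat.cast_nonneg i
      gcongr
      all_goals first | positivity | linarith
    calc ∑ i ∈ Finset.range j, (g (m+i+1) - g (m+i))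
        ≤ ∑ _i ∈ Finset.range j, (1+ε) / (b * (m:ℝ)^2) := Finset.sum_le_sum this
      _ = (j:ℝ) * ((1+ε) / (b * (m:ℝ)^2)) := by
          rw [Finset.sum_const, Finset.card_range, nsmul_eq_mul]

set_option maxHeartbeats 2000000 in
theorem Lemma_L_Diff1
    (h : ℝ → ℝ) (p : ℕ → ℝ) (b lam : ℝ) (k : ℕ → ℕ)
    (hb : 0 < b) (hlam : 0 < lam)
    (hp : ∀ i, 0 ≤ p i) (hpsum : ∑' i : ℕ, p i = 1)
    (hpgf : ∀ s ∈ Set.Icc (0:ℝ) 1, h s = ∑' i : ℕ, p i * s ^ i)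
    (hmean : ∑' i : ℕ, (i : ℝ) * p i = 1)
    (hvar : (∑' i : ℕ, (i : ℝ) ^ 2 * p i) - 1 = 2 * b)
    (hk : Filter.Tendsto k Filter.atTop Filter.atTop)
    (hko : Filter.Tendsto (fun n : ℕ => (k n : ℝ) / n) Filter.atTop (nhds 0))
    (hKolm : Filter.Tendsto (fun n : ℕ => b * n * (1 - h^[n] 0))
      Filter.atTop (nhds 1))
    (hlocal : Filter.Tendsto
      (fun j : ℕ => b * (j : ℝ) ^ 2 * (h^[j + 1] 0 - h^[j] 0))
      Filter.atTop (nhds 1)) :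
    Filter.Tendsto
      (fun n : ℕ =>
        b * lam * (n : ℝ) ^ 2 / (k n) *
          (h^[n - k n] (Real.exp (-lam / (b * k n))) - h^[n - k n] 0))
      Filter.atTop (nhds 1) := by
  -- basic pgf facts
  have hsum : Summable p := by
    by_contra hcon
    rw [tsum_eq_zero_of_not_summable hcon] at hpsum
    norm_num at hpsum
  have hsx : ∀ x ∈ Set.Icc (0:ℝ) 1, Summable (fun i => p i * x ^ i) := by
    intro x hx
    refine Summable.of_nonneg_of_le (fun i => mul_nonneg (hp i) (pow_nonneg hx.1 i))
      (fun i => ?_) hsum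
    have : x ^ i ≤ 1 := pow_le_one₀ hx.1 hx.2
    nlinarith [hp i]
  have hmono : ∀ x y, x ∈ Set.Icc (0:ℝ) 1 → y ∈ Set.Icc (0:ℝ) 1 → x ≤ y → h x ≤ h y := by
    intro x y hx hy hxy
    rw [hpgf x hx, hpgf y hy]
    refine Summable.tsum_le_tsum (fun i => ?_) (hsx x hx) (hsx y hy)
    exact mul_le_mul_of_nonneg_left (pow_le_pow_left₀ hx.1 hxy i) (hp i)
  have hmem : ∀ x ∈ Set.Icc (0:ℝ) 1, h x ∈ Set.Icc (0:ℝ) 1 := by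
    intro x hx
    constructor
    · rw [hpgf x hx]
      exact tsum_nonneg (fun i => mul_nonneg (hp i) (pow_nonneg hx.1 i))
    · have h1 : h 1 = 1 := by
        rw [hpgf 1 (by norm_num)]
        simpa using hpsum
      calc h x ≤ h 1 := hmono x 1 hx (by norm_num) hx.2
        _ = 1 := h1
  have hiter_mem := LD_iter_mem h hmem
  have hiter_mono : ∀ m x y, x ∈ Set.Icc (0:ℝ) 1 → y ∈ Set.Icc (0:ℝ) 1 → x ≤ y →
      h^[m] x ≤ h^[m] y := by
    intro m
    induction m with
    | zero => intro x y _ _ hxy; simpa using hxy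
    | succ m ih =>
      intro x y hx hy hxy
      rw [Function.iterate_succ_apply, Function.iterate_succ_apply]
      exact ih _ _ (hmem x hx) (hmem y hy) (hmono x y hx hy hxy)
  set g : ℕ → ℝ := fun i => h^[i] 0 with hgdef
  set s : ℕ → ℝ := fun n => Real.exp (-lam / (b * k n)) with hsdef
  set m : ℕ → ℕ := fun n => n - k n with hmdef
  have hg_mem : ∀ i, g i ∈ Set.Icc (0:ℝ) 1 := fun i => hiter_mem i 0 (by norm_num)
  have hs_mem : ∀ n, s n ∈ Set.Icc (0:ℝ) 1 := by
    intro n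
    constructor
    · exact (Real.exp_pos _).le
    · rw [hsdef]
      simp only
      rw [Real.exp_le_one_iff]
      have : (0:ℝ) ≤ lam / (b * k n) := by positivity
      rw [neg_div]
      linarith
  have hk1 : ∀ᶠ n in atTop, 1 ≤ k n := hk.eventually_ge_atTop 1
  have hkcast : Tendsto (fun n => (k n : ℝ)) atTop atTop :=
    tendsto_natCast_atTop_atTop.comp hk
  have hbk : Tendsto (fun n => b * (k n : ℝ)) atTop atTop :=
    hkcast.const_mul_atTop hb
  have hx0 : Tendsto (fun n => lam / (b * (k n : ℝ))) atTop (nhds 0) :=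
    tendsto_const_nhds.div_atTop hbk
  have hkle : ∀ᶠ n in atTop, 2 * k n ≤ n := by
    have h2 : ∀ᶠ n in atTop, (k n : ℝ) / n ≤ 1/2 :=
      hko.eventually (eventually_le_nhds (by norm_num))
    filter_upwards [h2, eventually_ge_atTop 1] with n hn hn1
    have hnpos : (0:ℝ) < n := by exact_mod_cast hn1
    have : (k n : ℝ) ≤ n / 2 := by
      rw [div_le_iff₀ hnpos] at hn
      linarith
    have : (2 * k n : ℝ) ≤ (n : ℝ) := by push_cast; linarith
    exact_mod_cast this
  have hmcast : ∀ᶠ n in atTop, ((m n : ℕ) : ℝ) = (n : ℝ) - (k n : ℝ) := by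
    filter_upwards [hkle] with n hn
    rw [hmdef]
    simp only
    have : k n ≤ n := by omega
    push_cast [this]
    ring
  have hm_top : Tendsto m atTop atTop := by
    rw [tendsto_atTop]
    intro C
    filter_upwards [hkle, eventually_ge_atTop (2 * C)] with n h1 h2
    rw [hmdef]; simp only; omega
  have hcn : ∀ n : ℕ, (0:ℝ) ≤ b * lam * (n : ℝ) ^ 2 / (k n) := by
    intro n
    positivity
  rw [tendsto_order]
  constructor
  · -- lower bound
    intro a ha
    set ε : ℝ := min (1/2) ((1-a)/4) with hεdef
    have hε0 : 0 < ε := lt_min (by norm_num) (by linarith)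
    have hε2 : ε ≤ 1/2 := min_le_left _ _
    have hεa : a < (1 - ε)^2 := by
      have h1 : ε ≤ (1-a)/4 := min_le_right _ _
      nlinarith
    set jm : ℕ → ℕ := fun n => ⌊(1-ε) * (k n : ℝ) / lam⌋₊ with hjmdef
    have hjm_top : Tendsto jm atTop atTop := by
      apply tendsto_nat_floor_atTop.comp
      exact Tendsto.atTop_div_const hlam (hkcast.const_mul_atTop (by linarith))
    have hjm_le : ∀ n, (jm n : ℝ) ≤ (1-ε) * (k n : ℝ) / lam := by
      intro n
      exact Nat.floor_le (div_nonneg (mul_nonneg (by linarith) (Nat.cast_nonneg _)) hlam.le)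
    have hjm_ge : ∀ n, (1-ε) * (k n : ℝ) / lam - 1 ≤ (jm n : ℝ) := by
      intro n
      have := Nat.lt_floor_add_one ((1-ε) * (k n : ℝ) / lam)
      linarith
    -- sandwich: g (jm n) ≤ s n eventually
    have hL1 : ∀ᶠ n in atTop, g (jm n) ≤ s n := by
      have hKc := hKolm.comp hjm_top
      have hev := hKc.eventually (eventually_ge_nhds (show 1 - ε/2 < 1 by linarith))
      filter_upwards [hev, hjm_top.eventually_ge_atTop 1, hk1] with n h1 h2 h3
      simp only [Function.comp_apply] at h1
      have hjmpos : (0:ℝ) < (jm n : ℝ) := by exact_mod_cast h2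
      have hkpos : (0:ℝ) < (k n : ℝ) := by exact_mod_cast h3
      have hbjm : (0:ℝ) < b * (jm n : ℝ) := by positivity
      have hbk' : (0:ℝ) < b * (k n : ℝ) := by positivity
      -- 1 - s n ≤ lam / (b * k n)
      have e1 : 1 - s n ≤ lam / (b * (k n : ℝ)) := by
        rw [hsdef]
        simp only
        have := Real.add_one_le_exp (-(lam / (b * (k n : ℝ))))
        rw [neg_div]
        linarith
      -- lam / (b * k n) ≤ (1 - ε/2) / (b * jm n)
      have e2 : lam / (b * (k n : ℝ)) ≤ (1 - ε/2) / (b * (jm n : ℝ)) := by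
        rw [div_le_div_iff₀ hbk' hbjm]
        have h4 : (jm n : ℝ) * lam ≤ (1-ε) * (k n : ℝ) := (le_div_iff₀ hlam).mp (hjm_le n)
        have h5 := mul_le_mul_of_nonneg_left h4 hb.le
        have h6 : (0:ℝ) ≤ (ε/2) * (b * (k n : ℝ)) :=
          mul_nonneg (by linarith) hbk'.le
        nlinarith [h5, h6]
      -- (1 - ε/2) / (b * jm n) ≤ 1 - g (jm n)
      have e3 : (1 - ε/2) / (b * (jm n : ℝ)) ≤ 1 - g (jm n) := by
        rw [div_le_iff₀ hbjm]
        calc 1 - ε/2 ≤ b * (jm n : ℝ) * (1 - h^[jm n] 0) := h1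
          _ = (1 - g (jm n)) * (b * (jm n : ℝ)) := by rw [hgdef]; ring
      linarith
    -- local estimate
    have hlo1 := hlocal.eventually (eventually_ge_nhds (show 1 - ε < 1 by linarith))
    have hlo2 := hlocal.eventually (eventually_le_nhds (show (1:ℝ) < 1 + ε by linarith))
    obtain ⟨N, hN⟩ := eventually_atTop.mp (hlo1.and hlo2)
    have hH : ∀ i : ℕ, N ≤ i → 1 - ε ≤ b * (i:ℝ)^2 * (g (i+1) - g i) ∧
        b * (i:ℝ)^2 * (g (i+1) - g i) ≤ 1 + ε := fun i hi => hN i hi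
    have hL3 : ∀ᶠ n in atTop,
        (jm n : ℝ) * ((1-ε) / (b * ((m n : ℝ) + (jm n : ℝ))^2)) ≤ g (m n + jm n) - g (m n) := by
      filter_upwards [hm_top.eventually_ge_atTop N, hm_top.eventually_ge_atTop 1] with n h1 h2
      exact (LD_sum_bound g b ε hb hε0.le (by linarith) N hH (m n) (jm n) h1 h2).1
    -- limit of the lower bound sequence
    have hA : Tendsto (fun n => (jm n : ℝ) / (k n : ℝ)) atTop (nhds ((1-ε)/lam)) := by
      have hup : ∀ᶠ n in atTop, (jm n : ℝ) / (k n : ℝ) ≤ (1-ε)/lam := by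
        filter_upwards [hk1] with n hn
        have hkpos : (0:ℝ) < (k n : ℝ) := by exact_mod_cast hn
        rw [div_le_div_iff₀ hkpos hlam]
        have h4 : (jm n : ℝ) * lam ≤ (1-ε) * (k n : ℝ) := (le_div_iff₀ hlam).mp (hjm_le n)
        linarith
      have hlo : ∀ᶠ n in atTop, (1-ε)/lam - 1/(k n : ℝ) ≤ (jm n : ℝ) / (k n : ℝ) := by
        filter_upwards [hk1] with n hn
        have hkpos : (0:ℝ) < (k n : ℝ) := by exact_mod_cast hn
        have heq : (1-ε)/lam - 1/(k n : ℝ) = ((1-ε) * (k n : ℝ) / lam - 1) / (k n : ℝ) := by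
          field_simp
        rw [heq]
        have := hjm_ge n
        gcongr
      have hlim : Tendsto (fun n => (1-ε)/lam - 1/(k n : ℝ)) atTop (nhds ((1-ε)/lam)) := by
        have h1 : Tendsto (fun n => 1/(k n : ℝ)) atTop (nhds 0) :=
          tendsto_const_nhds.div_atTop hkcast
        simpa using tendsto_const_nhds.sub h1
      exact tendsto_of_tendsto_of_tendsto_of_le_of_le' hlim tendsto_const_nhds hlo hup
    have hC : Tendsto (fun n : ℕ => (n:ℝ) / ((m n : ℝ) + (jm n : ℝ))) atTop (nhds 1) := by
      have hB : Tendsto (fun n : ℕ => ((m n : ℝ) + (jm n : ℝ)) / (n:ℝ)) atTop (nhds 1) := by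
        have heq : (fun n : ℕ => ((m n : ℝ) + (jm n : ℝ)) / (n:ℝ)) =ᶠ[atTop]
            (fun n : ℕ => 1 - (k n : ℝ)/(n:ℝ) + ((jm n : ℝ)/(k n : ℝ)) * ((k n : ℝ)/(n:ℝ))) := by
          filter_upwards [hmcast, hk1, eventually_ge_atTop 1] with n h1 h2 h3
          have hkpos : (0:ℝ) < (k n : ℝ) := by exact_mod_cast h2
          have hnpos : (0:ℝ) < (n : ℝ) := by exact_mod_cast h3
          rw [h1]
          field_simp
        have hlim : Tendsto
            (fun n : ℕ => 1 - (k n : ℝ)/(n:ℝ) + ((jm n : ℝ)/(k n : ℝ)) * ((k n : ℝ)/(n:ℝ)))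
            atTop (nhds 1) := by
          have := ((tendsto_const_nhds (x := (1:ℝ))).sub hko).add (hA.mul hko)
          simpa using this
        exact Tendsto.congr' heq.symm hlim
      have := hB.inv₀ one_ne_zero
      simp only [inv_div, inv_one] at this
      exact this
    have hQ : Tendsto (fun n : ℕ => b * lam * (n : ℝ) ^ 2 / (k n) *
        ((jm n : ℝ) * ((1-ε) / (b * ((m n : ℝ) + (jm n : ℝ))^2)))) atTop (nhds ((1-ε)^2)) := by
      have hG : Tendsto (fun n : ℕ => ((1-ε)*lam) * ((jm n : ℝ)/(k n : ℝ)) *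
          (((n:ℝ)/((m n : ℝ) + (jm n : ℝ))) * ((n:ℝ)/((m n : ℝ) + (jm n : ℝ)))))
          atTop (nhds (((1-ε)*lam) * ((1-ε)/lam) * (1*1))) :=
        (tendsto_const_nhds.mul hA).mul (hC.mul hC)
      have hval : ((1-ε)*lam) * ((1-ε)/lam) * (1*1) = (1-ε)^2 := by
        field_simp
      rw [hval] at hG
      refine Tendsto.congr' ?_ hG
      filter_upwards [hk1, hm_top.eventually_ge_atTop 1, eventually_ge_atTop 1] with n h1 h2 h3
      have hkpos : (0:ℝ) < (k n : ℝ) := by exact_mod_cast h1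
      have hmpos : (0:ℝ) < (m n : ℝ) := by exact_mod_cast h2
      have hmjpos : (0:ℝ) < (m n : ℝ) + (jm n : ℝ) := by
        have : (0:ℝ) ≤ (jm n : ℝ) := Nat.cast_nonneg _
        linarith
      field_simp
    have hev : ∀ᶠ n : ℕ in atTop, a < b * lam * (n : ℝ) ^ 2 / (k n) *
        ((jm n : ℝ) * ((1-ε) / (b * ((m n : ℝ) + (jm n : ℝ))^2))) :=
      hQ.eventually (eventually_gt_nhds hεa)
    -- combine
    filter_upwards [hL1, hL3, hev] with n h1 h3 h4
    show a < b * lam * (n : ℝ) ^ 2 / (k n) * (h^[m n] (s n) - g (m n))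
    have e1 : g (m n + jm n) = h^[m n] (g (jm n)) := Function.iterate_add_apply h (m n) (jm n) 0
    have e2 : h^[m n] (g (jm n)) ≤ h^[m n] (s n) :=
      hiter_mono (m n) _ _ (hg_mem _) (hs_mem n) h1
    have e3 : (jm n : ℝ) * ((1-ε) / (b * ((m n : ℝ) + (jm n : ℝ))^2)) ≤
        h^[m n] (s n) - g (m n) := by
      rw [e1] at h3
      linarith
    calc a < b * lam * (n : ℝ) ^ 2 / (k n) *
          ((jm n : ℝ) * ((1-ε) / (b * ((m n : ℝ) + (jm n : ℝ))^2))) := h4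
      _ ≤ b * lam * (n : ℝ) ^ 2 / (k n) * (h^[m n] (s n) - g (m n)) :=
          mul_le_mul_of_nonneg_left e3 (hcn n)
  · -- upper bound
    intro a ha
    set ε : ℝ := min (1/2) ((a-1)/5) with hεdef
    have hε0 : 0 < ε := lt_min (by norm_num) (by linarith)
    have hε2 : ε ≤ 1/2 := min_le_left _ _
    have hεa : (1 + ε)^2 < a := by
      have h1 : ε ≤ (a-1)/5 := min_le_right _ _
      nlinarith
    set jp : ℕ → ℕ := fun n => ⌈(1+ε) * (k n : ℝ) / lam⌉₊ with hjpdef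
    have hjp_top : Tendsto jp atTop atTop := by
      apply tendsto_nat_ceil_atTop.comp
      exact Tendsto.atTop_div_const hlam (hkcast.const_mul_atTop (by linarith))
    have hjp_ge : ∀ n, (1+ε) * (k n : ℝ) / lam ≤ (jp n : ℝ) := fun n => Nat.le_ceil _
    have hjp_le : ∀ n, (jp n : ℝ) ≤ (1+ε) * (k n : ℝ) / lam + 1 := by
      intro n
      exact (Nat.ceil_lt_add_one
        (div_nonneg (mul_nonneg (by linarith) (Nat.cast_nonneg _)) hlam.le)).le
    -- sandwich: s n ≤ g (jp n) eventually
    have hU1 : ∀ᶠ n in atTop, s n ≤ g (jp n) := by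
      have hKc := hKolm.comp hjp_top
      have hev := hKc.eventually (eventually_le_nhds (show (1:ℝ) < 1 + ε/3 by linarith))
      have hxs := hx0.eventually (eventually_le_nhds (show (0:ℝ) < ε/3 by linarith))
      filter_upwards [hev, hxs, hjp_top.eventually_ge_atTop 1, hk1] with n h1 h2 h3 h4
      simp only [Function.comp_apply] at h1
      have hjppos : (0:ℝ) < (jp n : ℝ) := by exact_mod_cast h3
      have hkpos : (0:ℝ) < (k n : ℝ) := by exact_mod_cast h4
      have hbjp : (0:ℝ) < b * (jp n : ℝ) := by positivity
      have hbk' : (0:ℝ) < b * (k n : ℝ) := by positivity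
      have hxpos : (0:ℝ) < lam / (b * (k n : ℝ)) := by positivity
      -- s n ≤ 1/(1+x)
      have e0 : s n ≤ 1/(1 + lam / (b * (k n : ℝ))) := by
        have hex : 1 + lam / (b * (k n : ℝ)) ≤ Real.exp (lam / (b * (k n : ℝ))) := by
          linarith [Real.add_one_le_exp (lam / (b * (k n : ℝ)))]
        have hse : s n = (Real.exp (lam / (b * (k n : ℝ))))⁻¹ := by
          rw [hsdef]
          simp only
          rw [neg_div, Real.exp_neg]
        rw [hse, one_div]
        exact inv_anti₀ (by linarith) hex
      -- 1 - s n ≥ x/(1+ε/3)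
      have e1 : (lam / (b * (k n : ℝ)))/(1+ε/3) ≤ 1 - s n := by
        have heq1 : 1 - 1/(1 + lam / (b * (k n : ℝ))) = (lam / (b * (k n : ℝ)))/(1 + lam / (b * (k n : ℝ))) := by
          field_simp
          ring
        have hge : (lam / (b * (k n : ℝ)))/(1+ε/3) ≤ (lam / (b * (k n : ℝ)))/(1 + lam / (b * (k n : ℝ))) := by
          gcongr
          all_goals first | exact hxpos.le | linarith
        linarith
      -- 1 - g (jp n) ≤ (1+ε/3)/(b * jp n)
      have e2 : 1 - g (jp n) ≤ (1 + ε/3) / (b * (jp n : ℝ)) := by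
        rw [le_div_iff₀ hbjp]
        calc (1 - g (jp n)) * (b * (jp n : ℝ))
            = b * (jp n : ℝ) * (1 - h^[jp n] 0) := by rw [hgdef]; ring
          _ ≤ 1 + ε/3 := h1
      -- (1+ε/3)/(b*jp n) ≤ x/(1+ε/3)
      have e3 : (1 + ε/3) / (b * (jp n : ℝ)) ≤ (lam / (b * (k n : ℝ)))/(1+ε/3) := by
        have hxe : (lam / (b * (k n : ℝ)))/(1+ε/3) = lam / (b * (k n : ℝ) * (1+ε/3)) := by
          rw [div_div]
        rw [hxe, div_le_div_iff₀ hbjp (by positivity)]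
        have h5 : (1+ε) * (k n : ℝ) ≤ (jp n : ℝ) * lam := (div_le_iff₀ hlam).mp (hjp_ge n)
        have h6 : (1+ε/3)^2 ≤ 1+ε := by nlinarith
        have h7 := mul_le_mul_of_nonneg_right h6 hbk'.le
        have h8 := mul_le_mul_of_nonneg_left h5 hb.le
        nlinarith [h7, h8]
      linarith
    -- local estimate
    have hlo1 := hlocal.eventually (eventually_ge_nhds (show 1 - ε < 1 by linarith))
    have hlo2 := hlocal.eventually (eventually_le_nhds (show (1:ℝ) < 1 + ε by linarith))
    obtain ⟨N, hN⟩ := eventually_atTop.mp (hlo1.and hlo2)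
    have hH : ∀ i : ℕ, N ≤ i → 1 - ε ≤ b * (i:ℝ)^2 * (g (i+1) - g i) ∧
        b * (i:ℝ)^2 * (g (i+1) - g i) ≤ 1 + ε := fun i hi => hN i hi
    have hU3 : ∀ᶠ n in atTop,
        g (m n + jp n) - g (m n) ≤ (jp n : ℝ) * ((1+ε) / (b * (m n : ℝ)^2)) := by
      filter_upwards [hm_top.eventually_ge_atTop N, hm_top.eventually_ge_atTop 1] with n h1 h2
      exact (LD_sum_bound g b ε hb hε0.le (by linarith) N hH (m n) (jp n) h1 h2).2
    -- limit of the upper bound sequence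
    have hA : Tendsto (fun n => (jp n : ℝ) / (k n : ℝ)) atTop (nhds ((1+ε)/lam)) := by
      have hlo : ∀ᶠ n in atTop, (1+ε)/lam ≤ (jp n : ℝ) / (k n : ℝ) := by
        filter_upwards [hk1] with n hn
        have hkpos : (0:ℝ) < (k n : ℝ) := by exact_mod_cast hn
        rw [div_le_div_iff₀ hlam hkpos]
        have h5 : (1+ε) * (k n : ℝ) ≤ (jp n : ℝ) * lam := (div_le_iff₀ hlam).mp (hjp_ge n)
        linarith
      have hup : ∀ᶠ n in atTop, (jp n : ℝ) / (k n : ℝ) ≤ (1+ε)/lam + 1/(k n : ℝ) := by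
        filter_upwards [hk1] with n hn
        have hkpos : (0:ℝ) < (k n : ℝ) := by exact_mod_cast hn
        have heq : (1+ε)/lam + 1/(k n : ℝ) = ((1+ε) * (k n : ℝ) / lam + 1) / (k n : ℝ) := by
          field_simp
        rw [heq]
        have := hjp_le n
        gcongr
      have hlim : Tendsto (fun n => (1+ε)/lam + 1/(k n : ℝ)) atTop (nhds ((1+ε)/lam)) := by
        have h1 : Tendsto (fun n => 1/(k n : ℝ)) atTop (nhds 0) :=
          tendsto_const_nhds.div_atTop hkcast
        simpa using tendsto_const_nhds.add h1
      exact tendsto_of_tendsto_of_tendsto_of_le_of_le' tendsto_const_nhds hlim hlo hup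
    have hC : Tendsto (fun n : ℕ => (n:ℝ) / (m n : ℝ)) atTop (nhds 1) := by
      have hB : Tendsto (fun n : ℕ => (m n : ℝ) / (n:ℝ)) atTop (nhds 1) := by
        have heq : (fun n : ℕ => (m n : ℝ) / (n:ℝ)) =ᶠ[atTop]
            (fun n : ℕ => 1 - (k n : ℝ)/(n:ℝ)) := by
          filter_upwards [hmcast, eventually_ge_atTop 1] with n h1 h3
          have hnpos : (0:ℝ) < (n : ℝ) := by exact_mod_cast h3
          rw [h1]
          field_simp
        have hlim : Tendsto (fun n : ℕ => 1 - (k n : ℝ)/(n:ℝ)) atTop (nhds 1) := by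
          have := (tendsto_const_nhds (x := (1:ℝ))).sub hko
          simpa using this
        exact Tendsto.congr' heq.symm hlim
      have := hB.inv₀ one_ne_zero
      simp only [inv_div, inv_one] at this
      exact this
    have hQ : Tendsto (fun n : ℕ => b * lam * (n : ℝ) ^ 2 / (k n) *
        ((jp n : ℝ) * ((1+ε) / (b * (m n : ℝ)^2)))) atTop (nhds ((1+ε)^2)) := by
      have hG : Tendsto (fun n : ℕ => ((1+ε)*lam) * ((jp n : ℝ)/(k n : ℝ)) *
          (((n:ℝ)/(m n : ℝ)) * ((n:ℝ)/(m n : ℝ))))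
          atTop (nhds (((1+ε)*lam) * ((1+ε)/lam) * (1*1))) :=
        (tendsto_const_nhds.mul hA).mul (hC.mul hC)
      have hval : ((1+ε)*lam) * ((1+ε)/lam) * (1*1) = (1+ε)^2 := by
        field_simp
      rw [hval] at hG
      refine Tendsto.congr' ?_ hG
      filter_upwards [hk1, hm_top.eventually_ge_atTop 1, eventually_ge_atTop 1] with n h1 h2 h3
      have hkpos : (0:ℝ) < (k n : ℝ) := by exact_mod_cast h1
      have hmpos : (0:ℝ) < (m n : ℝ) := by exact_mod_cast h2
      field_simp
    have hev : ∀ᶠ n : ℕ in atTop, b * lam * (n : ℝ) ^ 2 / (k n) *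
        ((jp n : ℝ) * ((1+ε) / (b * (m n : ℝ)^2))) < a :=
      hQ.eventually (eventually_lt_nhds hεa)
    -- combine
    filter_upwards [hU1, hU3, hev] with n h1 h3 h4
    show b * lam * (n : ℝ) ^ 2 / (k n) * (h^[m n] (s n) - g (m n)) < a
    have e1 : g (m n + jp n) = h^[m n] (g (jp n)) := Function.iterate_add_apply h (m n) (jp n) 0
    have e2 : h^[m n] (s n) ≤ h^[m n] (g (jp n)) :=
      hiter_mono (m n) _ _ (hs_mem n) (hg_mem _) h1
    have e3 : h^[m n] (s n) - g (m n) ≤ (jp n : ℝ) * ((1+ε) / (b * (m n : ℝ)^2)) := by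
      rw [e1] at h3
      linarith
    calc b * lam * (n : ℝ) ^ 2 / (k n) * (h^[m n] (s n) - g (m n))
        ≤ b * lam * (n : ℝ) ^ 2 / (k n) *
          ((jp n : ℝ) * ((1+ε) / (b * (m n : ℝ)^2))) :=
          mul_le_mul_of_nonneg_left e3 (hcn n)
      _ < a := h4
end

section
/- Let $W \ge 0$ be a random variable with $1 - E[e^{-\theta W}] \sim D \theta^{\gamma}$ as $\theta \downarrow 0$, where $D > 0$ and $\gamma \in (0,1)$. Then for every $\lambda > 0$ and $b>0$, $\lim_{n \to \infty} n^{\gamma - 1} E\big[ W e^{-\lambda W/(bn)} \big] = \frac{\gamma\, b\, D\, (1/b)^{\gamma}}{\lambda^{1-\gamma}}$ (in particular the expectations are finite for each $n$). -/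
open Filter Topology MeasureTheory

theorem Lemma_L_Diff2_abstract
    {Ω : Type*} [MeasurableSpace Ω] (μ : Measure Ω) [IsProbabilityMeasure μ]
    (W : Ω → ℝ) (D γ : ℝ)
    (hD : 0 < D) (hγ : γ ∈ Set.Ioo (0:ℝ) 1)
    (hmeas : Measurable W) (hnonneg : ∀ ω, 0 ≤ W ω)
    (hlaplace : Filter.Tendsto
      (fun θ : ℝ => (1 - ∫ ω, Real.exp (-θ * W ω) ∂μ) / (D * θ ^ γ))
      (nhdsWithin 0 (Set.Ioi 0)) (nhds 1)) :
    ∀ lam b : ℝ, 0 < lam → 0 < b →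
      (∀ n : ℕ, 1 ≤ n →
        Integrable (fun ω => W ω * Real.exp (-(lam / (b * n)) * W ω)) μ) ∧
      Filter.Tendsto
        (fun n : ℕ =>
          (n : ℝ) ^ (γ - 1) * ∫ ω, W ω * Real.exp (-(lam / (b * n)) * W ω) ∂μ)
        Filter.atTop (nhds (γ * b * D * (1 / b) ^ γ / lam ^ (1 - γ))) := by
  obtain ⟨hγ0, hγ1⟩ := hγ
  set F : ℝ → ℝ := fun θ => 1 - ∫ ω, Real.exp (-θ * W ω) ∂μ with hF
  set G : ℝ → ℝ := fun θ => ∫ ω, W ω * Real.exp (-θ * W ω) ∂μ with hG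
  set h : ℝ → ℝ := fun θ => F θ / (D * θ ^ γ) with hh
  have hlap : Tendsto h (nhdsWithin 0 (Set.Ioi 0)) (nhds 1) := hlaplace
  -- integrability of the exponentials
  have hexp_int : ∀ θ : ℝ, 0 ≤ θ → Integrable (fun ω => Real.exp (-θ * W ω)) μ := by
    intro θ hθ
    refine (integrable_const (1:ℝ)).mono'
      ((Real.measurable_exp.comp (hmeas.const_mul (-θ))).aestronglyMeasurable)
      (ae_of_all _ fun ω => ?_)
    rw [Real.norm_eq_abs, abs_of_pos (Real.exp_pos _)]
    exact Real.exp_le_one_iff.mpr (by nlinarith [hnonneg ω])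
  have hy : ∀ y : ℝ, 0 ≤ y → y * Real.exp (-y) ≤ 1 := by
    intro y hy0
    have hmul : Real.exp (-y) * Real.exp y = 1 := by rw [← Real.exp_add]; simp
    have h1 : y ≤ Real.exp y := by nlinarith [Real.add_one_le_exp y]
    nlinarith [mul_le_mul_of_nonneg_right h1 (Real.exp_pos (-y)).le]
  have hWG_int : ∀ θ : ℝ, 0 < θ → Integrable (fun ω => W ω * Real.exp (-θ * W ω)) μ := by
    intro θ hθ
    refine (integrable_const (1/θ)).mono'
      ((hmeas.mul (Real.measurable_exp.comp (hmeas.const_mul (-θ)))).aestronglyMeasurable)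
      (ae_of_all _ fun ω => ?_)
    have h0 : 0 ≤ W ω * Real.exp (-θ * W ω) := mul_nonneg (hnonneg ω) (Real.exp_pos _).le
    rw [Real.norm_eq_abs, abs_of_nonneg h0]
    have hkey := hy (θ * W ω) (mul_nonneg hθ.le (hnonneg ω))
    have heq : -θ * W ω = -(θ * W ω) := by ring
    rw [heq]
    calc W ω * Real.exp (-(θ * W ω))
        = (1/θ) * ((θ * W ω) * Real.exp (-(θ * W ω))) := by field_simp
      _ ≤ (1/θ) * 1 := by
          exact mul_le_mul_of_nonneg_left hkey (by positivity)
      _ = 1/θ := mul_one _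
  -- sandwich for increments of F
  have step3 : ∀ s t : ℝ, 0 < s → s ≤ t →
      (t - s) * G t ≤ F t - F s ∧ F t - F s ≤ (t - s) * G s := by
    intro s t hs hst
    have ht : 0 < t := lt_of_lt_of_le hs hst
    have hFts : F t - F s = ∫ ω, (Real.exp (-s * W ω) - Real.exp (-t * W ω)) ∂μ := by
      rw [integral_sub (hexp_int s hs.le) (hexp_int t ht.le)]
      simp only [hF]; ring
    constructor
    · have hmono : ∫ ω, (t - s) * (W ω * Real.exp (-t * W ω)) ∂μ
          ≤ ∫ ω, (Real.exp (-s * W ω) - Real.exp (-t * W ω)) ∂μ := by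
        refine integral_mono ((hWG_int t ht).const_mul _)
          ((hexp_int s hs.le).sub (hexp_int t ht.le)) (fun ω => ?_)
        have hx := hnonneg ω
        have hub := Real.add_one_le_exp ((t - s) * W ω)
        have e1 : Real.exp (-s * W ω) = Real.exp ((t - s) * W ω) * Real.exp (-t * W ω) := by
          rw [← Real.exp_add]; ring_nf
        simp only [e1]
        nlinarith [mul_nonneg (show (0:ℝ) ≤ Real.exp ((t-s)*W ω) - 1 - (t-s)*W ω by linarith)
          (Real.exp_pos (-t * W ω)).le]
      rwa [integral_const_mul, ← hFts] at hmono
    · have hmono : ∫ ω, (Real.exp (-s * W ω) - Real.exp (-t * W ω)) ∂μ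
          ≤ ∫ ω, (t - s) * (W ω * Real.exp (-s * W ω)) ∂μ := by
        refine integral_mono ((hexp_int s hs.le).sub (hexp_int t ht.le))
          ((hWG_int s hs).const_mul _) (fun ω => ?_)
        have hx := hnonneg ω
        have hub := Real.add_one_le_exp (-((t - s) * W ω))
        have e2 : Real.exp (-t * W ω) = Real.exp (-((t - s) * W ω)) * Real.exp (-s * W ω) := by
          rw [← Real.exp_add]; ring_nf
        simp only [e2]
        nlinarith [mul_nonneg
          (show (0:ℝ) ≤ (t-s)*W ω - 1 + Real.exp (-((t-s)*W ω)) by linarith)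
          (Real.exp_pos (-s * W ω)).le]
      rwa [integral_const_mul, ← hFts] at hmono
  -- lower bound
  have glow : ∀ a θ : ℝ, 1 < a → 0 < θ →
      (a ^ γ * h (a * θ) - h θ) / (a - 1) ≤ G θ / (D * θ ^ (γ - 1)) := by
    intro a θ ha hθ
    have ha0 : (0:ℝ) < a := lt_trans one_pos ha
    have h3 := (step3 θ (a * θ) hθ (by nlinarith)).2
    have hθγ : (0:ℝ) < θ ^ γ := Real.rpow_pos_of_pos hθ γ
    have hθγ1 : (0:ℝ) < θ ^ (γ - 1) := Real.rpow_pos_of_pos hθ _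
    have haγ : (0:ℝ) < a ^ γ := Real.rpow_pos_of_pos ha0 γ
    have hmul : θ ^ (γ - 1) * θ = θ ^ γ := by
      rw [Real.rpow_sub hθ, Real.rpow_one]; field_simp
    have hprod : (a * θ) ^ γ = a ^ γ * θ ^ γ := Real.mul_rpow ha0.le hθ.le
    simp only [hh]
    rw [hprod]
    have e1 : a ^ γ * (F (a * θ) / (D * (a ^ γ * θ ^ γ))) = F (a * θ) / (D * θ ^ γ) := by
      field_simp
    rw [e1, div_sub_div_same, div_div,
      div_le_div_iff₀ (mul_pos (mul_pos hD hθγ) (sub_pos.mpr ha)) (mul_pos hD hθγ1)]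
    calc (F (a * θ) - F θ) * (D * θ ^ (γ - 1))
        ≤ ((a * θ - θ) * G θ) * (D * θ ^ (γ - 1)) :=
          mul_le_mul_of_nonneg_right h3 (by positivity)
      _ = G θ * (D * θ ^ γ * (a - 1)) := by rw [← hmul]; ring
  -- upper bound
  have gupp : ∀ u θ : ℝ, 0 < u → u < 1 → 0 < θ →
      G θ / (D * θ ^ (γ - 1)) ≤ (h θ - u ^ γ * h (u * θ)) / (1 - u) := by
    intro u θ hu hu1 hθ
    have h3 := (step3 (u * θ) θ (mul_pos hu hθ) (by nlinarith)).1
    have hθγ : (0:ℝ) < θ ^ γ := Real.rpow_pos_of_pos hθ γ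
    have hθγ1 : (0:ℝ) < θ ^ (γ - 1) := Real.rpow_pos_of_pos hθ _
    have huγ : (0:ℝ) < u ^ γ := Real.rpow_pos_of_pos hu γ
    have hmul : θ ^ (γ - 1) * θ = θ ^ γ := by
      rw [Real.rpow_sub hθ, Real.rpow_one]; field_simp
    have hprod : (u * θ) ^ γ = u ^ γ * θ ^ γ := Real.mul_rpow hu.le hθ.le
    simp only [hh]
    rw [hprod]
    have e1 : u ^ γ * (F (u * θ) / (D * (u ^ γ * θ ^ γ))) = F (u * θ) / (D * θ ^ γ) := by
      field_simp
    rw [e1, div_sub_div_same, div_div,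
      div_le_div_iff₀ (mul_pos hD hθγ1) (mul_pos (mul_pos hD hθγ) (sub_pos.mpr hu1))]
    calc G θ * (D * θ ^ γ * (1 - u))
        = ((θ - u * θ) * G θ) * (D * θ ^ (γ - 1)) := by rw [← hmul]; ring
      _ ≤ (F θ - F (u * θ)) * (D * θ ^ (γ - 1)) :=
          mul_le_mul_of_nonneg_right h3 (by positivity)
  -- slope limit
  have hslope : Tendsto (fun x : ℝ => (x ^ γ - 1) / (x - 1))
      (nhdsWithin 1 {(1:ℝ)}ᶜ) (nhds γ) := by
    have hd : HasDerivAt (fun x : ℝ => x ^ γ) (γ * (1:ℝ) ^ (γ - 1)) 1 :=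
      Real.hasDerivAt_rpow_const (Or.inl one_ne_zero)
    have := hasDerivAt_iff_tendsto_slope.mp hd
    rw [Real.one_rpow, mul_one] at this
    refine this.congr fun x => ?_
    rw [slope_def_field, Real.one_rpow]
  -- composition with scaling
  have hcomp : ∀ c : ℝ, 0 < c →
      Tendsto (fun θ => h (c * θ)) (nhdsWithin 0 (Set.Ioi 0)) (nhds 1) := by
    intro c hc
    refine hlap.comp (tendsto_nhdsWithin_of_tendsto_nhds_of_eventually_within _ ?_ ?_)
    · have : Tendsto (fun θ : ℝ => c * θ) (nhds 0) (nhds (c * 0)) :=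
        (continuous_const.mul continuous_id).tendsto 0
      simpa [mul_zero] using this.mono_left nhdsWithin_le_nhds
    · filter_upwards [self_mem_nhdsWithin] with θ hθ
      exact mul_pos hc hθ
  -- main limit
  have gmain : Tendsto (fun θ : ℝ => G θ / (D * θ ^ (γ - 1)))
      (nhdsWithin 0 (Set.Ioi 0)) (nhds γ) := by
    rw [tendsto_order]
    constructor
    · intro c hc
      have h1 : ∀ᶠ x in nhdsWithin (1:ℝ) (Set.Ioi 1),
          c < (x ^ γ - 1) / (x - 1) ∧ x ∈ Set.Ioi (1:ℝ) :=
        ((hslope.mono_left (nhdsWithin_mono _ (fun x hx => ne_of_gt hx))).eventually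
          (eventually_gt_nhds hc)).and eventually_mem_nhdsWithin
      obtain ⟨a, hca, ha⟩ := h1.exists
      have ha1 : (1:ℝ) < a := ha
      have hlim : Tendsto (fun θ => (a ^ γ * h (a * θ) - h θ) / (a - 1))
          (nhdsWithin 0 (Set.Ioi 0)) (nhds ((a ^ γ * 1 - 1) / (a - 1))) :=
        (((hcomp a (lt_trans one_pos ha1)).const_mul _).sub hlap).div_const _
      have hca' : c < (a ^ γ * 1 - 1) / (a - 1) := by rwa [mul_one]
      have hev := hlim.eventually (eventually_gt_nhds hca')
      filter_upwards [hev, self_mem_nhdsWithin] with θ h1' h2'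
      exact lt_of_lt_of_le h1' (glow a θ ha1 h2')
    · intro c hc
      have h0 : ∀ᶠ x in nhdsWithin (1:ℝ) (Set.Iio 1), (0:ℝ) < x :=
        eventually_nhdsWithin_of_eventually_nhds (eventually_gt_nhds one_pos)
      have h1 : ∀ᶠ x in nhdsWithin (1:ℝ) (Set.Iio 1),
          ((x ^ γ - 1) / (x - 1) < c ∧ ((0:ℝ) < x ∧ x ∈ Set.Iio (1:ℝ))) :=
        ((hslope.mono_left (nhdsWithin_mono _ (fun x hx => ne_of_lt hx))).eventually
          (eventually_lt_nhds hc)).and (h0.and eventually_mem_nhdsWithin)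
      obtain ⟨u, hcu, hu0, hu1⟩ := h1.exists
      have hu1' : u < 1 := hu1
      have hlim : Tendsto (fun θ => (h θ - u ^ γ * h (u * θ)) / (1 - u))
          (nhdsWithin 0 (Set.Ioi 0)) (nhds ((1 - u ^ γ * 1) / (1 - u))) :=
        ((hlap.sub ((hcomp u hu0).const_mul _)).div_const _)
      have hval' : (1 - u ^ γ * 1) / (1 - u) = (u ^ γ - 1) / (u - 1) := by
        rw [mul_one, show (1 - u ^ γ) = -(u ^ γ - 1) by ring,
          show (1 - u) = -(u - 1) by ring, neg_div_neg_eq]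
      have hcu' : (1 - u ^ γ * 1) / (1 - u) < c := by rwa [hval']
      have hev := hlim.eventually (eventually_lt_nhds hcu')
      filter_upwards [hev, self_mem_nhdsWithin] with θ h1' h2'
      exact lt_of_le_of_lt (gupp u θ hu0 hu1' h2') h1'
  -- conclusion
  intro lam b hlam hb
  have hbn : ∀ n : ℕ, 1 ≤ n → 0 < lam / (b * n) := by
    intro n hn
    have hn' : (0:ℝ) < n := by exact_mod_cast hn
    exact div_pos hlam (mul_pos hb hn')
  refine ⟨fun n hn => hWG_int _ (hbn n hn), ?_⟩
  have htend : Tendsto (fun n : ℕ => lam / (b * n)) atTop (nhdsWithin 0 (Set.Ioi 0)) := by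
    refine tendsto_nhdsWithin_of_tendsto_nhds_of_eventually_within _ ?_ ?_
    · exact Tendsto.div_atTop tendsto_const_nhds
        (Tendsto.const_mul_atTop hb tendsto_natCast_atTop_atTop)
    · filter_upwards [eventually_ge_atTop 1] with n hn
      exact hbn n hn
  have hmain := (gmain.comp htend).mul_const (D * (lam / b) ^ (γ - 1))
  have hval : γ * (D * (lam / b) ^ (γ - 1)) = γ * b * D * (1 / b) ^ γ / lam ^ (1 - γ) := by
    have h1 : (lam / b) ^ (γ - 1) = lam ^ (γ - 1) / b ^ (γ - 1) := Real.div_rpow hlam.le hb.le _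
    have h2 : (1 / b : ℝ) ^ γ = 1 / b ^ γ := by
      rw [Real.div_rpow zero_le_one hb.le, Real.one_rpow]
    have h3 : lam ^ (γ - 1) = lam ^ γ / lam := by rw [Real.rpow_sub hlam, Real.rpow_one]
    have h4 : lam ^ (1 - γ) = lam / lam ^ γ := by rw [Real.rpow_sub hlam, Real.rpow_one]
    have h5 : b ^ (γ - 1) = b ^ γ / b := by rw [Real.rpow_sub hb, Real.rpow_one]
    rw [h1, h2, h3, h4, h5]
    have hbγ : (0:ℝ) < b ^ γ := Real.rpow_pos_of_pos hb γ
    have hlγ : (0:ℝ) < lam ^ γ := Real.rpow_pos_of_pos hlam γ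
    field_simp
  rw [← hval]
  refine Tendsto.congr' ?_ hmain
  filter_upwards [eventually_ge_atTop 1] with n hn
  have hn' : (0:ℝ) < n := by exact_mod_cast hn
  have hθ := hbn n hn
  have hθγ1 : (0:ℝ) < (lam / (b * n)) ^ (γ - 1) := Real.rpow_pos_of_pos hθ _
  have hmulr : (lam / b) ^ (γ - 1) = (lam / (b * n)) ^ (γ - 1) * (n:ℝ) ^ (γ - 1) := by
    rw [← Real.mul_rpow hθ.le hn'.le]
    congr 1
    field_simp
  show G (lam / (b * ↑n)) / (D * (lam / (b * ↑n)) ^ (γ - 1)) * (D * (lam / b) ^ (γ - 1))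
      = (↑n : ℝ) ^ (γ - 1) * G (lam / (b * ↑n))
  rw [hmulr]
  field_simp
end

section
/- Let $\phi(\theta) = E[e^{-\theta W}]$ be the Laplace transform of a nonnegative random variable $W$, and suppose $1 - \phi(\theta) \sim D\theta^{\gamma}$ as $\theta \downarrow 0$ with $D > 0$, $0 < \gamma < 1$. Then $-\phi'(\theta) = E[W e^{-\theta W}] \sim \gamma D \theta^{\gamma - 1}$ as $\theta \downarrow 0$. -/
open Filter Topology MeasureTheory

lemma lda_ptwise {w a b : ℝ} (hw : 0 ≤ w) (hab : a ≤ b) :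
    w * Real.exp (-b * w) * (b - a) ≤ Real.exp (-a * w) - Real.exp (-b * w) ∧
    Real.exp (-a * w) - Real.exp (-b * w) ≤ w * Real.exp (-a * w) * (b - a) := by
  have hu : 0 ≤ (b - a) * w := mul_nonneg (by linarith) hw
  have hEb : Real.exp (-b * w) = Real.exp (-a * w) * Real.exp (-((b - a) * w)) := by
    rw [← Real.exp_add]; congr 1; ring
  have h1 := Real.add_one_le_exp ((b - a) * w)
  have h2 := Real.add_one_le_exp (-((b - a) * w))
  have h3 : Real.exp ((b - a) * w) * Real.exp (-((b - a) * w)) = 1 := by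
    rw [← Real.exp_add]; simp
  have hea : 0 < Real.exp (-a * w) := Real.exp_pos _
  have heu : 0 < Real.exp (-((b - a) * w)) := Real.exp_pos _
  constructor
  · rw [hEb]
    have key : (b - a) * w * Real.exp (-((b - a) * w)) ≤ 1 - Real.exp (-((b - a) * w)) := by
      nlinarith
    nlinarith [mul_le_mul_of_nonneg_left key hea.le]
  · rw [hEb]
    have key : 1 - Real.exp (-((b - a) * w)) ≤ (b - a) * w := by linarith
    nlinarith [mul_le_mul_of_nonneg_left key hea.le]

lemma lda_int_exp {Ω : Type*} [MeasurableSpace Ω] (μ : Measure Ω) [IsProbabilityMeasure μ]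
    (W : Ω → ℝ) (hmeas : Measurable W) (hnonneg : ∀ ω, 0 ≤ W ω)
    (θ : ℝ) (hθ : 0 ≤ θ) : Integrable (fun ω => Real.exp (-θ * W ω)) μ := by
  have hm : AEStronglyMeasurable (fun ω => Real.exp (-θ * W ω)) μ :=
    (Real.measurable_exp.comp (hmeas.const_mul (-θ))).aestronglyMeasurable
  refine (integrable_const (1 : ℝ)).mono hm (ae_of_all _ fun ω => ?_)
  rw [Real.norm_eq_abs, Real.norm_eq_abs, Real.abs_exp, abs_one, Real.exp_le_one_iff]
  have := hnonneg ω; nlinarith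

lemma lda_int_wexp {Ω : Type*} [MeasurableSpace Ω] (μ : Measure Ω) [IsProbabilityMeasure μ]
    (W : Ω → ℝ) (hmeas : Measurable W) (hnonneg : ∀ ω, 0 ≤ W ω)
    (θ : ℝ) (hθ : 0 < θ) : Integrable (fun ω => W ω * Real.exp (-θ * W ω)) μ := by
  have hm : AEStronglyMeasurable (fun ω => W ω * Real.exp (-θ * W ω)) μ :=
    (hmeas.mul (Real.measurable_exp.comp (hmeas.const_mul (-θ)))).aestronglyMeasurable
  refine (integrable_const (1 / θ)).mono hm (ae_of_all _ fun ω => ?_)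
  have hw := hnonneg ω
  have he : 0 < Real.exp (-θ * W ω) := Real.exp_pos _
  rw [Real.norm_eq_abs, Real.norm_eq_abs,
    abs_of_nonneg (mul_nonneg hw he.le), abs_of_nonneg (by positivity)]
  have h1 := Real.add_one_le_exp (θ * W ω)
  have h3 : Real.exp (θ * W ω) * Real.exp (-θ * W ω) = 1 := by
    rw [← Real.exp_add]; simp
  rw [le_div_iff₀ hθ]
  nlinarith [mul_le_mul_of_nonneg_right h1 he.le]

lemma lda_deriv {Ω : Type*} [MeasurableSpace Ω] (μ : Measure Ω) [IsProbabilityMeasure μ]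
    (W : Ω → ℝ) (hmeas : Measurable W) (hnonneg : ∀ ω, 0 ≤ W ω) (θ : ℝ) (hθ : 0 < θ) :
    HasDerivAt (fun t : ℝ => ∫ ω, Real.exp (-t * W ω) ∂μ)
      (-(∫ ω, W ω * Real.exp (-θ * W ω) ∂μ)) θ := by
  have key := hasDerivAt_integral_of_dominated_loc_of_deriv_le
    (F := fun (t : ℝ) (ω : Ω) => Real.exp (-t * W ω))
    (F' := fun (t : ℝ) (ω : Ω) => Real.exp (-t * W ω) * (-W ω))
    (x₀ := θ) (bound := fun _ => 2 / θ) (μ := μ) (s := Metric.ball θ (θ / 2))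
    (Metric.ball_mem_nhds _ (by positivity))
    (Eventually.of_forall fun x =>
      ((Real.measurable_exp.comp (hmeas.const_mul (-x))).aestronglyMeasurable))
    (lda_int_exp μ W hmeas hnonneg θ hθ.le)
    (((Real.measurable_exp.comp (hmeas.const_mul (-θ))).mul hmeas.neg).aestronglyMeasurable)
    (ae_of_all _ fun ω x hx => ?_) (integrable_const _)
    (ae_of_all _ fun ω x hx => ?_)
  · have h2 := key.2
    have heq : (fun ω => Real.exp (-θ * W ω) * (-W ω))
        = fun ω => -(W ω * Real.exp (-θ * W ω)) := by funext ω; ring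
    rw [heq, integral_neg] at h2
    exact h2
  · -- bound
    have hw := hnonneg ω
    have hx2 : θ / 2 ≤ x := by
      have := abs_lt.1 (mem_ball_iff_norm.1 hx); linarith [this.1]
    have he : Real.exp (-x * W ω) ≤ Real.exp (-(θ/2) * W ω) :=
      Real.exp_le_exp.2 (by nlinarith)
    have hep : 0 < Real.exp (-x * W ω) := Real.exp_pos _
    rw [Real.norm_eq_abs, abs_mul, abs_neg, abs_of_nonneg hw, abs_of_pos hep]
    have h1 := Real.add_one_le_exp ((θ/2) * W ω)
    have h3 : Real.exp ((θ/2) * W ω) * Real.exp (-(θ/2) * W ω) = 1 := by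
      rw [← Real.exp_add]; ring_nf; exact Real.exp_zero
    have he2 : 0 < Real.exp (-(θ/2) * W ω) := Real.exp_pos _
    have : W ω * Real.exp (-(θ/2) * W ω) ≤ 2 / θ := by
      rw [le_div_iff₀ hθ]
      nlinarith [mul_le_mul_of_nonneg_right h1 he2.le]
    calc Real.exp (-x * W ω) * (W ω) ≤ Real.exp (-(θ/2) * W ω) * W ω := by nlinarith
    _ ≤ 2 / θ := by rw [mul_comm]; exact this
  · -- differentiability
    have h1 : HasDerivAt (fun t : ℝ => -t * W ω) (-W ω) x := by
      simpa using ((hasDerivAt_id x).neg.mul_const (W ω))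
    exact h1.exp


lemma lda_sandwich {Ω : Type*} [MeasurableSpace Ω] (μ : Measure Ω) [IsProbabilityMeasure μ]
    (W : Ω → ℝ) (hmeas : Measurable W) (hnonneg : ∀ ω, 0 ≤ W ω) {a b : ℝ} (ha : 0 < a) (hab : a ≤ b) :
    (∫ ω, W ω * Real.exp (-b * W ω) ∂μ) * (b - a)
      ≤ (∫ ω, Real.exp (-a * W ω) ∂μ) - ∫ ω, Real.exp (-b * W ω) ∂μ ∧
    (∫ ω, Real.exp (-a * W ω) ∂μ) - (∫ ω, Real.exp (-b * W ω) ∂μ)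
      ≤ (∫ ω, W ω * Real.exp (-a * W ω) ∂μ) * (b - a) := by
  have hb : 0 < b := lt_of_lt_of_le ha hab
  have ia := lda_int_exp μ W hmeas hnonneg a ha.le
  have ib := lda_int_exp μ W hmeas hnonneg b hb.le
  have iwa := lda_int_wexp μ W hmeas hnonneg a ha
  have iwb := lda_int_wexp μ W hmeas hnonneg b hb
  constructor
  · rw [← integral_mul_const, ← integral_sub ia ib]
    exact integral_mono (iwb.mul_const _) (ia.sub ib)
      (fun ω => (lda_ptwise (hnonneg ω) hab).1)
  · rw [← integral_mul_const, ← integral_sub ia ib]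
    exact integral_mono (ia.sub ib) (iwa.mul_const _)
      (fun ω => (lda_ptwise (hnonneg ω) hab).2)
theorem laplace_derivative_asymptotics
    {Ω : Type*} [MeasurableSpace Ω] (μ : Measure Ω) [IsProbabilityMeasure μ]
    (W : Ω → ℝ) (D γ : ℝ)
    (hD : 0 < D) (hγ : γ ∈ Set.Ioo (0:ℝ) 1)
    (hmeas : Measurable W) (hnonneg : ∀ ω, 0 ≤ W ω)
    (hlaplace : Filter.Tendsto
      (fun θ : ℝ => (1 - ∫ ω, Real.exp (-θ * W ω) ∂μ) / (D * θ ^ γ))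
      (nhdsWithin 0 (Set.Ioi 0)) (nhds 1)) :
    (∀ θ : ℝ, 0 < θ →
      HasDerivAt (fun t : ℝ => ∫ ω, Real.exp (-t * W ω) ∂μ)
        (-(∫ ω, W ω * Real.exp (-θ * W ω) ∂μ)) θ) ∧
    Filter.Tendsto
      (fun θ : ℝ =>
        (∫ ω, W ω * Real.exp (-θ * W ω) ∂μ) / (γ * D * θ ^ (γ - 1)))
      (nhdsWithin 0 (Set.Ioi 0)) (nhds 1) := by
  obtain ⟨hγ0, hγ1⟩ := hγ
  refine ⟨fun θ hθ => lda_deriv μ W hmeas hnonneg θ hθ, ?_⟩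
  set φ : ℝ → ℝ := fun t => ∫ ω, Real.exp (-t * W ω) ∂μ with hφdef
  set g : ℝ → ℝ := fun t => ∫ ω, W ω * Real.exp (-t * W ω) ∂μ with hgdef
  set r : ℝ → ℝ := fun θ => (1 - φ θ) / (D * θ ^ γ) with hrdef
  have hr : Tendsto r (nhdsWithin 0 (Set.Ioi 0)) (nhds 1) := hlaplace
  have hone : ∀ θ : ℝ, 0 < θ → 1 - φ θ = r θ * (D * θ ^ γ) := by
    intro θ hθ
    have : D * θ ^ γ ≠ 0 := by positivity
    rw [hrdef]; field_simp
  -- lower bound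
  have hlow : ∀ c : ℝ, 1 < c → ∀ θ : ℝ, 0 < θ →
      (c ^ γ * r (c * θ) - r θ) / (γ * (c - 1)) ≤ g θ / (γ * D * θ ^ (γ - 1)) := by
    intro c hc θ hθ
    have hc0 : (0:ℝ) < c := by linarith
    have hcθ : 0 < c * θ := by positivity
    have ht : (0:ℝ) < θ ^ (γ - 1) := Real.rpow_pos_of_pos hθ _
    have hsand := (lda_sandwich μ W hmeas hnonneg hθ (le_mul_of_one_le_left hθ.le hc.le)).2
    have hcθγ : (c * θ) ^ γ = c ^ γ * θ ^ γ := Real.mul_rpow hc0.le hθ.le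
    have hθid : θ ^ γ = θ ^ (γ - 1) * θ := by
      rw [← Real.rpow_add_one hθ.ne' (γ - 1)]; norm_num
    have key : (c ^ γ * r (c * θ) - r θ) * (D * (θ ^ (γ - 1) * θ)) ≤ g θ * ((c - 1) * θ) := by
      calc (c ^ γ * r (c * θ) - r θ) * (D * (θ ^ (γ - 1) * θ))
          = r (c * θ) * (D * (c * θ) ^ γ) - r θ * (D * θ ^ γ) := by
            rw [hcθγ, ← hθid]; ring
        _ = φ θ - φ (c * θ) := by rw [← hone θ hθ, ← hone (c * θ) hcθ]; ring
        _ ≤ g θ * (c * θ - θ) := hsand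
        _ = g θ * ((c - 1) * θ) := by ring
    have key2 : (c ^ γ * r (c * θ) - r θ) * (D * θ ^ (γ - 1)) ≤ g θ * (c - 1) := by
      have h3 : (c ^ γ * r (c * θ) - r θ) * (D * θ ^ (γ - 1)) * θ ≤ g θ * (c - 1) * θ := by
        nlinarith [key]
      exact le_of_mul_le_mul_right h3 hθ
    rw [div_le_div_iff₀ (mul_pos hγ0 (by linarith)) (by positivity)]
    nlinarith [mul_le_mul_of_nonneg_left key2 hγ0.le]
  -- upper bound
  have hupp : ∀ c : ℝ, 1 < c → ∀ θ : ℝ, 0 < θ →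
      g θ / (γ * D * θ ^ (γ - 1)) ≤ (r θ - r (θ / c) / c ^ γ) * c / (γ * (c - 1)) := by
    intro c hc θ hθ
    have hc0 : (0:ℝ) < c := by linarith
    have hθc : 0 < θ / c := by positivity
    have ht : (0:ℝ) < θ ^ (γ - 1) := Real.rpow_pos_of_pos hθ _
    have hcγ : (0:ℝ) < c ^ γ := Real.rpow_pos_of_pos hc0 _
    have hsand := (lda_sandwich μ W hmeas hnonneg hθc
      (by rw [div_le_iff₀ hc0]; nlinarith [mul_lt_mul_of_pos_left hc hθ])).1
    have hcθγ : (θ / c) ^ γ = θ ^ γ / c ^ γ := Real.div_rpow hθ.le hc0.le γ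
    have hθid : θ ^ γ = θ ^ (γ - 1) * θ := by
      rw [← Real.rpow_add_one hθ.ne' (γ - 1)]; norm_num
    have key : g θ * ((c - 1) / c * θ) ≤ (r θ - r (θ / c) / c ^ γ) * (D * (θ ^ (γ - 1) * θ)) := by
      have hcc : (c - 1) / c * θ = θ - θ / c := by field_simp
      calc g θ * ((c - 1) / c * θ) = g θ * (θ - θ / c) := by rw [hcc]
        _ ≤ φ (θ / c) - φ θ := hsand
        _ = r θ * (D * θ ^ γ) - r (θ / c) * (D * (θ / c) ^ γ) := by
            rw [← hone θ hθ, ← hone (θ / c) hθc]; ring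
        _ = (r θ - r (θ / c) / c ^ γ) * (D * θ ^ γ) := by
            rw [hcθγ]; field_simp
        _ = (r θ - r (θ / c) / c ^ γ) * (D * (θ ^ (γ - 1) * θ)) := by rw [← hθid]
    have key3 : g θ * ((c - 1) * θ)
        ≤ (r θ - r (θ / c) / c ^ γ) * (D * (θ ^ (γ - 1) * θ)) * c := by
      have h := mul_le_mul_of_nonneg_right key hc0.le
      have hcc3 : g θ * ((c - 1) / c * θ) * c = g θ * ((c - 1) * θ) := by
        field_simp
      rw [hcc3] at h
      exact h
    have key4 : g θ * (c - 1) ≤ (r θ - r (θ / c) / c ^ γ) * (D * θ ^ (γ - 1)) * c := by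
      have h3 : g θ * (c - 1) * θ
          ≤ (r θ - r (θ / c) / c ^ γ) * (D * θ ^ (γ - 1)) * c * θ := by nlinarith [key3]
      exact le_of_mul_le_mul_right h3 hθ
    rw [div_le_div_iff₀ (by positivity) (mul_pos hγ0 (by linarith))]
    nlinarith [mul_le_mul_of_nonneg_left key4 hγ0.le]
  -- limits in c
  have hslope : Tendsto (fun c : ℝ => (c ^ γ - 1) / (γ * (c - 1)))
      (nhdsWithin 1 (Set.Ioi 1)) (nhds 1) := by
    have hd : HasDerivAt (fun x : ℝ => x ^ γ) (γ * (1:ℝ) ^ (γ - 1)) 1 :=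
      Real.hasDerivAt_rpow_const (Or.inl one_ne_zero)
    rw [Real.one_rpow, mul_one, hasDerivAt_iff_tendsto_slope] at hd
    have hd2 : Tendsto (slope (fun x : ℝ => x ^ γ) 1) (nhdsWithin 1 (Set.Ioi 1)) (nhds γ) :=
      hd.mono_left (nhdsWithin_mono _ (fun x hx => ne_of_gt hx))
    have h := hd2.div_const γ
    rw [div_self hγ0.ne'] at h
    refine h.congr (fun c => ?_)
    rw [slope_def_field, Real.one_rpow, div_div, mul_comm]
  have hupplim : Tendsto (fun c : ℝ => (1 - 1 / c ^ γ) * c / (γ * (c - 1)))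
      (nhdsWithin 1 (Set.Ioi 1)) (nhds 1) := by
    have hpow : Tendsto (fun c : ℝ => c ^ (1 - γ)) (nhdsWithin 1 (Set.Ioi 1))
        (nhds 1) := by
      have := (Real.continuousAt_rpow_const 1 (1 - γ) (Or.inl one_ne_zero)).tendsto
      rw [Real.one_rpow] at this
      exact this.mono_left nhdsWithin_le_nhds
    have h := hslope.mul hpow
    rw [mul_one] at h
    refine h.congr' ?_
    filter_upwards [self_mem_nhdsWithin] with c hc
    have hc0 : (0:ℝ) < c := lt_trans one_pos hc
    have hcγ : (0:ℝ) < c ^ γ := Real.rpow_pos_of_pos hc0 _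
    have h1γ : c ^ (1 - γ) = c / c ^ γ := by
      rw [Real.rpow_sub hc0, Real.rpow_one]
    rw [h1γ]
    field_simp
  -- assemble
  rw [Metric.tendsto_nhds]
  intro ε hε
  have h1 : ∀ᶠ c in nhdsWithin 1 (Set.Ioi 1),
      1 - ε < (c ^ γ - 1) / (γ * (c - 1)) :=
    hslope.eventually_const_lt (by linarith)
  have h2 : ∀ᶠ c in nhdsWithin 1 (Set.Ioi 1),
      (1 - 1 / c ^ γ) * c / (γ * (c - 1)) < 1 + ε :=
    hupplim.eventually_lt_const (by linarith)
  obtain ⟨c, ⟨hc1, hc2⟩, hc⟩ := ((h1.and h2).and self_mem_nhdsWithin).exists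
  have hcgt : (1:ℝ) < c := hc
  have hc0 : (0:ℝ) < c := by linarith
  -- θ-limits for this fixed c
  have hmul : Tendsto (fun θ : ℝ => c * θ) (nhdsWithin 0 (Set.Ioi 0))
      (nhdsWithin 0 (Set.Ioi 0)) := by
    apply tendsto_nhdsWithin_of_tendsto_nhds_of_eventually_within
    · have h0 : Tendsto (fun θ : ℝ => c * θ) (𝓝 (0:ℝ)) (𝓝 (c * 0)) :=
        (continuous_const.mul continuous_id).tendsto 0
      rw [mul_zero] at h0
      exact h0.mono_left nhdsWithin_le_nhds
    · filter_upwards [self_mem_nhdsWithin] with θ hθ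
      exact mul_pos hc0 hθ
  have hdiv : Tendsto (fun θ : ℝ => θ / c) (nhdsWithin 0 (Set.Ioi 0))
      (nhdsWithin 0 (Set.Ioi 0)) := by
    apply tendsto_nhdsWithin_of_tendsto_nhds_of_eventually_within
    · have h0 : Tendsto (fun θ : ℝ => θ / c) (𝓝 (0:ℝ)) (𝓝 ((0:ℝ) / c)) :=
        (continuous_id.div_const c).tendsto 0
      rw [zero_div] at h0
      exact h0.mono_left nhdsWithin_le_nhds
    · filter_upwards [self_mem_nhdsWithin] with θ hθ
      exact div_pos hθ hc0
  have hLc : Tendsto (fun θ : ℝ => (c ^ γ * r (c * θ) - r θ) / (γ * (c - 1)))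
      (nhdsWithin 0 (Set.Ioi 0)) (nhds ((c ^ γ - 1) / (γ * (c - 1)))) := by
    have := (((hr.comp hmul).const_mul (c ^ γ)).sub hr).div_const (γ * (c - 1))
    simpa using this
  have hUc : Tendsto (fun θ : ℝ => (r θ - r (θ / c) / c ^ γ) * c / (γ * (c - 1)))
      (nhdsWithin 0 (Set.Ioi 0)) (nhds ((1 - 1 / c ^ γ) * c / (γ * (c - 1)))) := by
    have := (((hr.sub ((hr.comp hdiv).div_const (c ^ γ))).mul_const c).div_const (γ * (c - 1)))
    simpa [one_div] using this
  have hev1 := hLc.eventually_const_lt hc1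
  have hev2 := hUc.eventually_lt_const hc2
  filter_upwards [hev1, hev2, self_mem_nhdsWithin] with θ hθ1 hθ2 hθ
  have hθ0 : (0:ℝ) < θ := hθ
  have hl := hlow c hcgt θ hθ0
  have hu := hupp c hcgt θ hθ0
  rw [Real.dist_eq, abs_sub_lt_iff]
  constructor <;> [skip; skip] <;>
    · simp only [hgdef] at hl hu
      linarith
end

section
/- Let $h$ be the pgf of a critical offspring distribution with iterates $h_n$, and suppose the limit $U(s) = \lim_{n\to\infty} b n^2 (h_n(s) - h_n(0))$ exists for each $s \in [0,1)$, where $b > 0$. Assume also the local limit asymptotic $h_{n+1}(0) - h_n(0) \sim 1/(bn^2)$. Then $U$ satisfies the functional equation $U(h(s)) = U(s) + 1$ for all $s \in [0,1)$. -/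
open Filter Topology

theorem harmonic_functional_equation
    (h U : ℝ → ℝ) (p : ℕ → ℝ) (b : ℝ) (hb : 0 < b)
    (hp : ∀ i, 0 ≤ p i) (hpsum : ∑' i : ℕ, p i = 1)
    (hpgf : ∀ s ∈ Set.Icc (0:ℝ) 1, h s = ∑' i : ℕ, p i * s ^ i)
    (hmean : ∑' i : ℕ, (i : ℝ) * p i = 1)
    (hU : ∀ s ∈ Set.Ico (0:ℝ) 1,
      Filter.Tendsto (fun n : ℕ => b * (n : ℝ) ^ 2 * (h^[n] s - h^[n] 0))
        Filter.atTop (nhds (U s)))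
    (hlocal : Filter.Tendsto
      (fun n : ℕ => b * (n : ℝ) ^ 2 * (h^[n + 1] 0 - h^[n] 0))
      Filter.atTop (nhds 1)) :
    ∀ s ∈ Set.Ico (0:ℝ) 1, U (h s) = U s + 1 := by
  intro s hs
  obtain ⟨hs0, hs1⟩ := hs
  -- p is summable
  have hpS : Summable p := by
    by_contra hcon
    rw [tsum_eq_zero_of_not_summable hcon] at hpsum
    norm_num at hpsum
  have hmS : Summable (fun i : ℕ => (i : ℝ) * p i) := by
    by_contra hcon
    rw [tsum_eq_zero_of_not_summable hcon] at hmean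
    norm_num at hmean
  -- summability of p i * s^i
  have hpsS : Summable (fun i : ℕ => p i * s ^ i) := by
    apply Summable.of_nonneg_of_le (fun i => mul_nonneg (hp i) (pow_nonneg hs0 i))
      (fun i => ?_) hpS
    have : s ^ i ≤ 1 := pow_le_one₀ hs0 hs1.le
    nlinarith [hp i]
  -- exists i ≥ 1 with p i > 0
  have hex : ∃ i : ℕ, (i : ℝ) * p i ≠ 0 := by
    by_contra hcon
    push_neg at hcon
    simp only [hcon, tsum_zero] at hmean
    norm_num at hmean
  obtain ⟨i, hi⟩ := hex
  have hi1 : 1 ≤ i := by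
    rcases Nat.eq_zero_or_pos i with h0 | h0
    · simp [h0] at hi
    · exact h0
  have hpi : 0 < p i := lt_of_le_of_ne (hp i) (by
    intro hh; apply hi; rw [← hh]; ring)
  -- h s ∈ [0, 1)
  have hhs_eq : h s = ∑' i : ℕ, p i * s ^ i := hpgf s ⟨hs0, hs1.le⟩
  have hhs0 : 0 ≤ h s := by
    rw [hhs_eq]
    exact tsum_nonneg fun i => mul_nonneg (hp i) (pow_nonneg hs0 i)
  have hdS : Summable (fun j : ℕ => p j * (1 - s ^ j)) := by
    have := hpS.sub hpsS
    simpa [mul_sub] using this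
  have hterm : p i * (1 - s ^ i) ≤ ∑' j : ℕ, p j * (1 - s ^ j) := by
    apply Summable.le_tsum hdS i
    intro j _
    have h1 : s ^ j ≤ 1 := pow_le_one₀ hs0 hs1.le
    nlinarith [hp j]
  have hsum_d : ∑' j : ℕ, p j * (1 - s ^ j) = 1 - h s := by
    rw [hhs_eq]
    have := Summable.tsum_sub hpS hpsS
    simpa [mul_sub, hpsum] using this
  have hsi : s ^ i < 1 := pow_lt_one₀ hs0 hs1 (by omega)
  have hhs1 : h s < 1 := by nlinarith [hterm, hsum_d]
  -- the key limit
  have key := hU (h s) ⟨hhs0, hhs1⟩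
  simp only [← Function.iterate_succ_apply] at key
  -- key : Tendsto (fun n => b * n^2 * (h^[n+1] s - h^[n] 0)) atTop (nhds (U (h s)))
  have hUs := (hU s ⟨hs0, hs1⟩).comp (tendsto_add_atTop_nat 1)
  -- ratio tends to 1
  have hr : Tendsto (fun n : ℕ => ((n : ℝ) / (n + 1)) ^ 2) atTop (nhds 1) := by
    have h1 : Tendsto (fun n : ℕ => (n : ℝ) / (n + 1)) atTop (nhds 1) := by
      have := tendsto_one_div_add_atTop_nhds_zero_nat (𝕜 := ℝ)
      have h2 : Tendsto (fun n : ℕ => 1 - 1 / ((n : ℝ) + 1)) atTop (nhds (1 - 0)) :=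
        tendsto_const_nhds.sub this
      simp only [sub_zero] at h2
      refine h2.congr fun n => ?_
      have : ((n : ℝ) + 1) ≠ 0 := by positivity
      field_simp
      ring
    simpa using h1.pow 2
  have hA : Tendsto (fun n : ℕ => b * (n : ℝ) ^ 2 * (h^[n + 1] s - h^[n + 1] 0))
      atTop (nhds (U s)) := by
    have := hr.mul hUs
    simp only [one_mul] at this
    refine this.congr fun n => ?_
    have hne : ((n : ℝ) + 1) ≠ 0 := by positivity
    simp only [Function.comp]
    push_cast
    field_simp
  have hsum : Tendsto (fun n : ℕ => b * (n : ℝ) ^ 2 * (h^[n + 1] s - h^[n + 1] 0)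
      + b * (n : ℝ) ^ 2 * (h^[n + 1] 0 - h^[n] 0)) atTop (nhds (U s + 1)) :=
    hA.add hlocal
  have heq : (fun n : ℕ => b * (n : ℝ) ^ 2 * (h^[n + 1] s - h^[n + 1] 0)
      + b * (n : ℝ) ^ 2 * (h^[n + 1] 0 - h^[n] 0))
      = fun n : ℕ => b * (n : ℝ) ^ 2 * (h^[n + 1] s - h^[n] 0) := by
    funext n; ring
  rw [heq] at hsum
  exact tendsto_nhds_unique key hsum
end
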